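/- arXiv:1711.08639 — 2 statements merged into one kernel-verified Lean document; each statement's English description precedes it below -/
import Mathlib

section
/- Let V be a 2-vector space, Γ an essentially finite groupoid, V ∈ V an object, and ξ_V : Γ → V the constant functor with value V. Then lim ξ_V exists and is canonically isomorphic to both the product ∏_{π₀(Γ)} V and the coproduct ∐_{π₀(Γ)} V, and the pushforward map t_* : lim ξ_V → V along the unique functor t : Γ → ⋆ acts on the summand indexed by [x] ∈ π₀(Γ) as (1/|Aut(x)|) · id_V. -/
open CategoryTheory CategoryTheory.Limits

universe v u

/-- Isomorphism classes of objects (π₀). -/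
abbrev Pi0 (C : Type*) [Category C] : Type _ := Quotient (CategoryTheory.isIsomorphicSetoid C)

/-- Isomorphism classes of simple objects. -/
abbrev SimpleClasses (V : Type u) [Category.{v} V] [Limits.HasZeroMorphisms V] : Type _ :=
  Pi0 (ObjectProperty.FullSubcategory (fun X : V => Simple X))

/-- A 2-vector space (of Kapranov–Voevodsky type): a ℂ-linear additive category with
finite biproducts which is semisimple with finitely many isomorphism classes of simple
objects. -/
class IsTwoVectorSpace (V : Type u) [Category.{v} V] [Preadditive V]
    [CategoryTheory.Linear ℂ V] [HasFiniteBiproducts V] : Prop where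
  semisimple : ∀ X : V, ∃ (n : ℕ) (f : Fin n → V) (_ : ∀ i, Simple (f i)), Nonempty (X ≅ ⨁ f)
  finiteSimples : Finite (SimpleClasses V)

/-- An essentially finite groupoid: finitely many isomorphism classes, finite hom-sets. -/
class EssentiallyFiniteGroupoid (C : Type*) [Category C] : Prop where
  finite_pi0 : Finite (Pi0 C)
  finite_hom : ∀ x y : C, Finite (x ⟶ y)

/-- for an essentially finite groupoid `Γ` and an object `V₀` of a 2-vector
space `V`, the limit of the constant functor `ξ_{V₀} : Γ ⥤ V` exists; it is canonically
isomorphic to the biproduct (= product = coproduct) `⨁_{π₀(Γ)} V₀`, compatibly with the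
limit projections; and the pushforward `t_*` along `t : Γ ⥤ ⋆` — the
groupoid-cardinality-weighted sum `Σ_{[x]} (1/|Aut x|) · π_{[x]}` of the limit
projections — acts on the summand indexed by `[x] ∈ π₀(Γ)` as `(1/|Aut x|) · id`. -/
theorem limit_constant_functor_essentially_finite
    {V : Type u} [Category.{v} V] [Preadditive V] [CategoryTheory.Linear ℂ V]
    [HasFiniteBiproducts V] [IsTwoVectorSpace V]
    {Γ : Type} [Groupoid Γ] [EssentiallyFiniteGroupoid Γ] (V₀ : V) :
    HasLimit ((Functor.const Γ).obj V₀) ∧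
    (∀ [HasLimit ((Functor.const Γ).obj V₀)] [HasBiproduct (fun _ : Pi0 Γ => V₀)],
      ∃ e : limit ((Functor.const Γ).obj V₀) ≅ ⨁ (fun _ : Pi0 Γ => V₀),
        (∀ c : Pi0 Γ,
          e.hom ≫ biproduct.π (fun _ : Pi0 Γ => V₀) c =
            limit.π ((Functor.const Γ).obj V₀) c.out) ∧
        (∀ c : Pi0 Γ,
          biproduct.ι (fun _ : Pi0 Γ => V₀) c ≫ e.inv ≫
              (∑ᶠ d : Pi0 Γ, (Nat.card (d.out ⟶ d.out) : ℂ)⁻¹ •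
                (limit.π ((Functor.const Γ).obj V₀) d.out : limit ((Functor.const Γ).obj V₀) ⟶ V₀)) =
            (Nat.card (c.out ⟶ c.out) : ℂ)⁻¹ • 𝟙 V₀)) := by
  classical
  have hfin : Finite (Pi0 Γ) := EssentiallyFiniteGroupoid.finite_pi0
  have : Fintype (Pi0 Γ) := Fintype.ofFinite _
  -- For a cone over the constant functor, legs at isomorphic objects agree.
  have hcone : ∀ (s : Cone ((Functor.const Γ).obj V₀)) (x y : Γ),
      (Quotient.mk (isIsomorphicSetoid Γ) x = Quotient.mk (isIsomorphicSetoid Γ) y) →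
      s.π.app x = s.π.app y := by
    intro s x y h
    obtain ⟨i⟩ := Quotient.exact h
    have := s.π.naturality i.hom
    simpa using this.symm
  -- The candidate limit cone.
  let cn : Cone ((Functor.const Γ).obj V₀) :=
    { pt := ⨁ (fun _ : Pi0 Γ => V₀)
      π :=
        { app := fun x => biproduct.π (fun _ : Pi0 Γ => V₀)
            (Quotient.mk (isIsomorphicSetoid Γ) x)
          naturality := fun x y f => by
            have h : (Quotient.mk (isIsomorphicSetoid Γ) x)
                = Quotient.mk (isIsomorphicSetoid Γ) y :=
              Quotient.sound ⟨(Groupoid.isoEquivHom x y).symm f⟩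
            simp [h] } }
  have hlim : IsLimit cn :=
    { lift := fun s => biproduct.lift fun d => s.π.app d.out
      fac := fun s x => by
        simp only [cn, biproduct.lift_π]
        exact hcone s _ x (Quotient.out_eq _)
      uniq := fun s m hm => by
        apply biproduct.hom_ext
        intro d
        simp only [biproduct.lift_π]
        have := hm d.out
        simp only [cn] at this
        rw [Quotient.out_eq] at this
        exact this }
  have cnapp : ∀ x : Γ, cn.π.app x = biproduct.π (fun _ : Pi0 Γ => V₀)
      (Quotient.mk (isIsomorphicSetoid Γ) x) := fun _ => rfl
  have hL : HasLimit ((Functor.const Γ).obj V₀) := ⟨⟨⟨cn, hlim⟩⟩⟩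
  refine ⟨hL, ?_⟩
  intro _ _
  set F := (Functor.const Γ).obj V₀
  refine ⟨(limit.isLimit F).conePointUniqueUpToIso hlim, ?_, ?_⟩
  · intro c
    have := IsLimit.conePointUniqueUpToIso_hom_comp (limit.isLimit F) hlim c.out
    rw [cnapp, Quotient.out_eq] at this
    exact this
  · intro c
    have hinv : ∀ d : Pi0 Γ,
        ((limit.isLimit F).conePointUniqueUpToIso hlim).inv ≫ limit.π F d.out =
          biproduct.π (fun _ : Pi0 Γ => V₀) d := by
      intro d
      have := IsLimit.conePointUniqueUpToIso_inv_comp (limit.isLimit F) hlim d.out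
      rw [cnapp, Quotient.out_eq] at this
      exact this
    rw [finsum_eq_sum_of_fintype, Preadditive.comp_sum, Preadditive.comp_sum]
    have hterm : ∀ d : Pi0 Γ,
        biproduct.ι (fun _ : Pi0 Γ => V₀) c ≫
            ((limit.isLimit F).conePointUniqueUpToIso hlim).inv ≫
            ((Nat.card (d.out ⟶ d.out) : ℂ)⁻¹ • limit.π F d.out) =
          if c = d then (Nat.card (c.out ⟶ c.out) : ℂ)⁻¹ • 𝟙 V₀ else 0 := by
      intro d
      rw [Linear.comp_smul, Linear.comp_smul, ← Category.assoc, Category.assoc, hinv d,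
        biproduct.ι_π]
      by_cases h : c = d
      · subst h
        simp
      · simp [h]
    rw [Finset.sum_congr rfl fun d _ => hterm d]
    simp
end

section
/- In the bicategory of spans of essentially finite groupoids (1-morphisms Γ₀ ← Λ → Γ₁, composition by homotopy pullback, monoidal structure by Cartesian product, unit the terminal groupoid ⋆), every object Γ is dualizable in the homotopy category, with dual Γ itself, evaluation span Γ × Γ ← Γ → ⋆ and coevaluation span ⋆ ← Γ → Γ × Γ given by the diagonal, satisfying the triangle identities up to 2-isomorphism. -/
open CategoryTheory

/-- Two spans `X ⟵ A ⟶ Y` and `X ⟵ B ⟶ Y` of categories are equivalent (2-isomorphic in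
the span bicategory) if there is an equivalence of the apexes commuting with the legs up
to natural isomorphism. -/
def SpansEquivalent {X Y A B : Type*} [Category X] [Category Y] [Category A] [Category B]
    (lA : A ⥤ X) (rA : A ⥤ Y) (lB : B ⥤ X) (rB : B ⥤ Y) : Prop :=
  ∃ E : A ⥤ B, E.IsEquivalence ∧ Nonempty (E ⋙ lB ≅ lA) ∧ Nonempty (E ⋙ rB ≅ rA)

variable (Γ : Type*) [Groupoid Γ]

/-- The right leg of the span `id_Γ ⊗ coev` (with `coev` given by the diagonal). -/
def idTensorCoev : (Γ × Γ) ⥤ (Γ × Γ × Γ) where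
  obj p := (p.1, p.2, p.2)
  map f := (f.1, f.2, f.2)

/-- The left leg of the span `ev ⊗ id_Γ` (with `ev` given by the diagonal). -/
def evTensorId : (Γ × Γ) ⥤ (Γ × Γ × Γ) where
  obj p := (p.1, p.1, p.2)
  map f := (f.1, f.1, f.2)

/-- The right leg of the span `coev ⊗ id_Γ`. -/
def coevTensorId : (Γ × Γ) ⥤ ((Γ × Γ) × Γ) where
  obj p := ((p.1, p.1), p.2)
  map f := ((f.1, f.1), f.2)

/-- The left leg of the span `id_Γ ⊗ ev`. -/
def idTensorEv : (Γ × Γ) ⥤ ((Γ × Γ) × Γ) where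
  obj p := ((p.1, p.2), p.2)
  map f := ((f.1, f.2), f.2)

lemma idTensorCoev_obj (p : Γ × Γ) : (idTensorCoev Γ).obj p = (p.1, p.2, p.2) := rfl

lemma evTensorId_obj (p : Γ × Γ) : (evTensorId Γ).obj p = (p.1, p.1, p.2) := rfl

lemma coevTensorId_obj (p : Γ × Γ) : (coevTensorId Γ).obj p = ((p.1, p.1), p.2) := rfl

lemma idTensorEv_obj (p : Γ × Γ) : (idTensorEv Γ).obj p = ((p.1, p.2), p.2) := rfl

lemma gpd_w1 {C : Type*} [Groupoid C] {a b : C} (f : a ⟶ b) :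
    𝟙 a ≫ 𝟙 a = f ≫ Groupoid.inv f := by
  simp

lemma gpd_w3 {C : Type*} [Groupoid C] {a b c : C} (f : a ⟶ b) (u : a ⟶ c) :
    u ≫ 𝟙 c = f ≫ Groupoid.inv f ≫ u := by
  simp

lemma gpd_lB {C : Type*} [Groupoid C] {a a' c c' : C} {l1 : a ⟶ a'} {r : c ⟶ c'}
    {xf : a ⟶ c} {yf : a' ⟶ c'} (h1 : l1 ≫ yf = xf ≫ r) :
    r ≫ Groupoid.inv yf = Groupoid.inv xf ≫ l1 := by
  simp only [Groupoid.inv_eq_inv]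
  rw [IsIso.eq_inv_comp, ← Category.assoc, ← h1]
  simp

lemma gpd_lA {C : Type*} [Groupoid C] {a a' b b' c c' : C} {l1 : a ⟶ a'} {l2 : b ⟶ b'}
    {r : c ⟶ c'} {xf : a ⟶ c} {yf : a' ⟶ c'} {xk : b ⟶ c} {yk : b' ⟶ c'}
    (h1 : l1 ≫ yf = xf ≫ r) (h2 : l2 ≫ yk = xk ≫ r) :
    l2 ≫ yk ≫ Groupoid.inv yf = (xk ≫ Groupoid.inv xf) ≫ l1 := by
  rw [← Category.assoc, h2, Category.assoc, gpd_lB h1, Category.assoc]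

lemma gpd_lC {C : Type*} [Groupoid C] {a a' b b' c c' d d' : C} {l1 : a ⟶ a'} {l2 : b ⟶ b'}
    {r1 : c ⟶ c'} {r2 : d ⟶ d'} {xf : a ⟶ c} {yf : a' ⟶ c'} {xk : b ⟶ c} {yk : b' ⟶ c'}
    {xm : b ⟶ d} {ym : b' ⟶ d'}
    (h1 : l1 ≫ yf = xf ≫ r1) (h2 : l2 ≫ yk = xk ≫ r1) (h3 : l2 ≫ ym = xm ≫ r2) :
    l1 ≫ yf ≫ Groupoid.inv yk ≫ ym = (xf ≫ Groupoid.inv xk ≫ xm) ≫ r2 := by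
  simp only [Category.assoc]
  rw [reassoc_of% h1, reassoc_of% (gpd_lB h2), h3]

lemma gpd_lD {C : Type*} [Groupoid C] {a a' b b' c c' d d' : C} {l1 : a ⟶ a'} {l2 : b ⟶ b'}
    {r1 : c ⟶ c'} {r2 : d ⟶ d'} {xf : a ⟶ c} {yf : a' ⟶ c'} {xk : a ⟶ d} {yk : a' ⟶ d'}
    {xm : b ⟶ d} {ym : b' ⟶ d'}
    (h1 : l1 ≫ yf = xf ≫ r1) (h2 : l1 ≫ yk = xk ≫ r2) (h3 : l2 ≫ ym = xm ≫ r2) :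
    r1 ≫ Groupoid.inv yf ≫ yk ≫ Groupoid.inv ym =
      (Groupoid.inv xf ≫ xk ≫ Groupoid.inv xm) ≫ l2 := by
  simp only [Category.assoc]
  rw [reassoc_of% (gpd_lB h1), reassoc_of% h2, gpd_lB h3]

/-- Apex functor for the first zig-zag composite. -/
def E1 : Comma (idTensorCoev Γ) (evTensorId Γ) ⥤ Γ where
  obj X := X.left.1
  map g := g.left.1

/-- Quasi-inverse of `E1`. -/
def F1 : Γ ⥤ Comma (idTensorCoev Γ) (evTensorId Γ) where
  obj x := ⟨(x, x), (x, x), 𝟙 _⟩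
  map f := ⟨(f, f), (f, f), by
    refine Prod.ext (by simp [idTensorCoev, evTensorId]) (Prod.ext ?_ ?_) <;>
      simp [idTensorCoev, evTensorId]⟩

set_option maxHeartbeats 1000000 in
/-- The apex of the first zig-zag composite is equivalent to `Γ`. -/
def eqv1 : Comma (idTensorCoev Γ) (evTensorId Γ) ≌ Γ :=
  CategoryTheory.Equivalence.mk (E1 Γ) (F1 Γ)
    (NatIso.ofComponents (fun X =>
      Comma.isoMk
        (Iso.mk (𝟙 X.left.1, X.hom.2.1 ≫ Groupoid.inv X.hom.1)
                (𝟙 X.left.1, X.hom.1 ≫ Groupoid.inv X.hom.2.1)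
                (by dsimp [F1, E1, idTensorCoev_obj, evTensorId_obj]; exact Prod.ext (by simp) (by simp))
                (by dsimp [F1, E1, idTensorCoev_obj, evTensorId_obj]; exact Prod.ext (by simp) (by simp)))
        (Iso.mk (Groupoid.inv X.hom.1, Groupoid.inv X.hom.2.2 ≫ X.hom.2.1 ≫ Groupoid.inv X.hom.1)
                (X.hom.1, X.hom.1 ≫ Groupoid.inv X.hom.2.1 ≫ X.hom.2.2)
                (by dsimp [F1, E1, idTensorCoev_obj, evTensorId_obj]; exact Prod.ext (by simp) (by simp))
                (by dsimp [F1, E1, idTensorCoev_obj, evTensorId_obj]; exact Prod.ext (by simp) (by simp)))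
        (by
          refine Prod.ext ?_ (Prod.ext ?_ ?_)
          · exact gpd_w1 _
          · exact Category.comp_id _
          · exact gpd_w3 _ _))
      (by
        intro X Y g
        have h1 := congrArg (fun h => h.1) g.w
        have h2 := congrArg (fun h => h.2.1) g.w
        have h3 := congrArg (fun h => h.2.2) g.w
        dsimp [idTensorCoev, evTensorId] at h1 h2 h3
        apply CommaMorphism.ext
        · refine Prod.ext ?_ ?_
          · exact (Category.comp_id _).trans (Category.id_comp _).symm
          · exact gpd_lA h1 h2
        · refine Prod.ext ?_ ?_
          · exact gpd_lB h1
          · exact gpd_lD h3 h2 h1))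
    (Iso.refl _)

/-- Apex functor for the second zig-zag composite. -/
def E2 : Comma (coevTensorId Γ) (idTensorEv Γ) ⥤ Γ where
  obj X := X.left.2
  map g := g.left.2

/-- Quasi-inverse of `E2`. -/
def F2 : Γ ⥤ Comma (coevTensorId Γ) (idTensorEv Γ) where
  obj x := ⟨(x, x), (x, x), 𝟙 _⟩
  map f := ⟨(f, f), (f, f), by
    refine Prod.ext (Prod.ext ?_ ?_) ?_ <;>
      simp [coevTensorId, idTensorEv]⟩

set_option maxHeartbeats 1000000 in
/-- The apex of the second zig-zag composite is equivalent to `Γ`. -/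
def eqv2 : Comma (coevTensorId Γ) (idTensorEv Γ) ≌ Γ :=
  CategoryTheory.Equivalence.mk (E2 Γ) (F2 Γ)
    (NatIso.ofComponents (fun X =>
      Comma.isoMk
        (Iso.mk (X.hom.1.2 ≫ Groupoid.inv X.hom.2, 𝟙 X.left.2)
                (X.hom.2 ≫ Groupoid.inv X.hom.1.2, 𝟙 X.left.2)
                (by dsimp [F2, E2, coevTensorId_obj, idTensorEv_obj]; exact Prod.ext (by simp) (by simp))
                (by dsimp [F2, E2, coevTensorId_obj, idTensorEv_obj]; exact Prod.ext (by simp) (by simp)))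
        (Iso.mk (Groupoid.inv X.hom.1.1 ≫ X.hom.1.2 ≫ Groupoid.inv X.hom.2, Groupoid.inv X.hom.2)
                (X.hom.2 ≫ Groupoid.inv X.hom.1.2 ≫ X.hom.1.1, X.hom.2)
                (by dsimp [F2, E2, coevTensorId_obj, idTensorEv_obj]; exact Prod.ext (by simp) (by simp))
                (by dsimp [F2, E2, coevTensorId_obj, idTensorEv_obj]; exact Prod.ext (by simp) (by simp)))
        (by
          refine Prod.ext (Prod.ext ?_ ?_) ?_
          · exact gpd_w3 _ _
          · exact Category.comp_id _
          · exact gpd_w1 _))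
      (by
        intro X Y g
        have h1 := congrArg (fun h => h.1.1) g.w
        have h2 := congrArg (fun h => h.1.2) g.w
        have h3 := congrArg (fun h => h.2) g.w
        dsimp [coevTensorId, idTensorEv] at h1 h2 h3
        apply CommaMorphism.ext
        · refine Prod.ext ?_ ?_
          · exact gpd_lA h3 h2
          · exact (Category.comp_id _).trans (Category.id_comp _).symm
        · refine Prod.ext ?_ ?_
          · exact gpd_lD h1 h2 h3
          · exact gpd_lB h3))
    (Iso.refl _)

/-- in the symmetric monoidal bicategory of spans of essentially finite
groupoids (composition by homotopy pullback, i.e. comma categories; monoidal structure by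
Cartesian product; unit the terminal groupoid), every object `Γ` is dualizable with dual
`Γ` itself, evaluation span `Γ × Γ ⟵ Γ ⟶ ⋆` and coevaluation span `⋆ ⟵ Γ ⟶ Γ × Γ` given
by the diagonal: both triangle (zig-zag) composites — computed as homotopy pullbacks —
are 2-isomorphic (equivalent as spans) to the identity span on `Γ`. -/
theorem span_groupoid_dualizable [EssentiallyFiniteGroupoid Γ] :
    SpansEquivalent
      (Comma.fst (idTensorCoev Γ) (evTensorId Γ) ⋙ CategoryTheory.Prod.fst Γ Γ)
      (Comma.snd (idTensorCoev Γ) (evTensorId Γ) ⋙ CategoryTheory.Prod.snd Γ Γ)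
      (𝟭 Γ) (𝟭 Γ) ∧
    SpansEquivalent
      (Comma.fst (coevTensorId Γ) (idTensorEv Γ) ⋙ CategoryTheory.Prod.snd Γ Γ)
      (Comma.snd (coevTensorId Γ) (idTensorEv Γ) ⋙ CategoryTheory.Prod.fst Γ Γ)
      (𝟭 Γ) (𝟭 Γ) := by
  constructor
  · refine ⟨E1 Γ, (eqv1 Γ).isEquivalence_functor, ⟨Iso.refl _⟩, ⟨?_⟩⟩
    refine NatIso.ofComponents
      (fun X => asIso (X.hom.1 ≫ Groupoid.inv X.hom.2.1 ≫ X.hom.2.2)) ?_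
    intro X Y g
    have h1 := congrArg (fun h => h.1) g.w
    have h2 := congrArg (fun h => h.2.1) g.w
    have h3 := congrArg (fun h => h.2.2) g.w
    dsimp [idTensorCoev, evTensorId] at h1 h2 h3
    exact gpd_lC h1 h2 h3
  · refine ⟨E2 Γ, (eqv2 Γ).isEquivalence_functor, ⟨Iso.refl _⟩, ⟨?_⟩⟩
    refine NatIso.ofComponents
      (fun X => asIso (X.hom.2 ≫ Groupoid.inv X.hom.1.2 ≫ X.hom.1.1)) ?_
    intro X Y g
    have h1 := congrArg (fun h => h.1.1) g.w
    have h2 := congrArg (fun h => h.1.2) g.w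
    have h3 := congrArg (fun h => h.2) g.w
    dsimp [coevTensorId, idTensorEv] at h1 h2 h3
    exact gpd_lC h3 h2 h1
end
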